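/- Let ε > 0 and let F : [0,1] × {z ∈ ℂ : |z| < 1+ε} → ℂ² be continuous such that for each t ∈ [0,1] the map z ↦ F(t,z) is holomorphic. Then for every δ > 0 there exist an open neighborhood W ⊆ ℂ² of [0,1] × {|z| ≤ 1 + ε/2} (viewing [0,1] ⊂ ℝ ⊂ ℂ) and a holomorphic map 𝓕 : W → ℂ² such that sup_{(t,z) ∈ [0,1] × {|z| ≤ 1+ε/2}} |𝓕(t,z) − F(t,z)| < δ and 𝓕(1,z) = F(1,z) for all |z| ≤ 1 + ε/2. -/

import Mathlib

set_option maxHeartbeats 2000000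


open Metric Set Complex

open scoped unitInterval

theorem family_of_discs_joint_holomorphic_approximation
    (ε : ℝ) (hε : 0 < ε) (F : ℝ → ℂ → ℂ × ℂ)
    (hFcont : ContinuousOn (fun q : ℝ × ℂ => F q.1 q.2)
      (Icc (0 : ℝ) 1 ×ˢ ball (0 : ℂ) (1 + ε)))
    (hFhol : ∀ t ∈ Icc (0 : ℝ) 1, DifferentiableOn ℂ (F t) (ball (0 : ℂ) (1 + ε)))
    (δ : ℝ) (hδ : 0 < δ) :
    ∃ W : Set (ℂ × ℂ), IsOpen W ∧
      ((Complex.ofReal '' Icc (0 : ℝ) 1) ×ˢ closedBall (0 : ℂ) (1 + ε / 2)) ⊆ W ∧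
      ∃ 𝓕 : ℂ × ℂ → ℂ × ℂ, DifferentiableOn ℂ 𝓕 W ∧
        (∀ t ∈ Icc (0 : ℝ) 1, ∀ z ∈ closedBall (0 : ℂ) (1 + ε / 2),
          ‖𝓕 ((t : ℂ), z) - F t z‖ < δ) ∧
        (∀ z ∈ closedBall (0 : ℂ) (1 + ε / 2), 𝓕 ((1 : ℂ), z) = F 1 z) := by
  have hball : closedBall (0 : ℂ) (1 + ε / 2) ⊆ ball (0 : ℂ) (1 + ε) :=
    closedBall_subset_ball (by linarith)
  set K : Set (ℝ × ℂ) := Icc (0 : ℝ) 1 ×ˢ closedBall (0 : ℂ) (1 + ε / 2) with hKdef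
  have hKsub : K ⊆ Icc (0 : ℝ) 1 ×ˢ ball (0 : ℂ) (1 + ε) :=
    Set.prod_mono_right hball
  have hKc : IsCompact K := isCompact_Icc.prod (isCompact_closedBall _ _)
  have hcontK : ContinuousOn (fun q : ℝ × ℂ => F q.1 q.2) K := hFcont.mono hKsub
  obtain ⟨M, hM⟩ := hKc.exists_bound_of_continuousOn hcontK
  set M' : ℝ := max M 1 with hM'def
  have hM'pos : (0 : ℝ) < M' := lt_of_lt_of_le one_pos (le_max_right _ _)
  have hM' : ∀ p ∈ K, ‖F p.1 p.2‖ ≤ M' := fun p hp => (hM p hp).trans (le_max_left _ _)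
  -- uniform continuity on K
  have hu : UniformContinuousOn (fun q : ℝ × ℂ => F q.1 q.2) K :=
    hKc.uniformContinuousOn_of_continuous hcontK
  rw [Metric.uniformContinuousOn_iff] at hu
  obtain ⟨η, hη, hηs⟩ := hu (δ / 3) (by linarith)
  -- choose n
  obtain ⟨n, hngt⟩ := exists_nat_gt (max 1 (6 * M' / (η ^ 2 * δ)))
  have hn1 : (1 : ℝ) < n := lt_of_le_of_lt (le_max_left _ _) hngt
  have hnpos : (0 : ℝ) < n := by linarith
  have hnne : (n : ℝ) ≠ 0 := ne_of_gt hnpos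
  have hnbig : 6 * M' / (η ^ 2 * δ) < n := lt_of_le_of_lt (le_max_right _ _) hngt
  have hkey : 2 * M' / (η ^ 2 * n) < δ / 3 := by
    rw [div_lt_iff₀ (by positivity)] at hnbig ⊢
    nlinarith [sq_nonneg η]
  -- membership of the sample points
  have hzmem : ∀ k : Fin (n + 1), ((k : ℝ) / n) ∈ Icc (0 : ℝ) 1 := fun k => (bernstein.z k).2
  -- the approximating map
  set c : Fin (n + 1) → ℂ → ℂ := fun k w => (n.choose k : ℂ) * w ^ (k : ℕ) * (1 - w) ^ (n - k)
    with hcdef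
  set G : ℂ × ℂ → ℂ × ℂ := fun p => ∑ k : Fin (n + 1), c k p.1 • F ((k : ℝ) / n) p.2 with hGdef
  refine ⟨Set.univ ×ˢ ball (0 : ℂ) (1 + ε), isOpen_univ.prod isOpen_ball,
    Set.prod_mono (subset_univ _) hball, G, ?_, ?_, ?_⟩
  · -- differentiability
    apply DifferentiableOn.fun_sum
    intro k _
    have hc : Differentiable ℂ fun p : ℂ × ℂ => c k p.1 := by
      apply Differentiable.mul
      · exact (differentiable_const _).mul (differentiable_fst.pow _)
      · exact ((differentiable_const _).sub differentiable_fst).pow _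
    have hF : DifferentiableOn ℂ (fun p : ℂ × ℂ => F ((k : ℝ) / n) p.2)
        (Set.univ ×ˢ ball (0 : ℂ) (1 + ε)) := by
      apply (hFhol _ (hzmem k)).comp differentiable_snd.differentiableOn
      intro p hp
      exact hp.2
    exact hc.differentiableOn.smul hF
  · -- approximation estimate
    intro t ht z hz
    set x : I := ⟨t, ht⟩ with hxdef
    have hcb : ∀ k : Fin (n + 1), c k (t : ℂ) = ((bernstein n k x : ℝ) : ℂ) := by
      intro k
      rw [hcdef, bernstein_apply]
      push_cast
      ring
    have hdiff : G ((t : ℂ), z) - F t z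
        = ∑ k : Fin (n + 1), ((bernstein n k x : ℝ) : ℂ) • (F ((k : ℝ) / n) z - F t z) := by
      have hprob : (∑ k : Fin (n + 1), bernstein n k x) = 1 := bernstein.probability n x
      have h1 : F t z = ∑ k : Fin (n + 1), ((bernstein n k x : ℝ) : ℂ) • F t z := by
        rw [← Finset.sum_smul]
        norm_cast
        rw [hprob]
        norm_num
      calc G ((t : ℂ), z) - F t z
          = (∑ k : Fin (n + 1), ((bernstein n k x : ℝ) : ℂ) • F ((k : ℝ) / n) z)
            - ∑ k : Fin (n + 1), ((bernstein n k x : ℝ) : ℂ) • F t z := by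
            rw [← h1, hGdef]
            simp only [smul_eq_mul]
            congr 1
            exact Finset.sum_congr rfl fun k _ => by rw [hcb k]
        _ = _ := by rw [← Finset.sum_sub_distrib]; exact Finset.sum_congr rfl fun k _ => (smul_sub _ _ _).symm
    have hterm : ∀ k : Fin (n + 1),
        ‖((bernstein n k x : ℝ) : ℂ) • (F ((k : ℝ) / n) z - F t z)‖
          ≤ bernstein n k x * (δ / 3)
            + 2 * M' / η ^ 2 * (((x : ℝ) - ((k : ℝ) / n)) ^ 2 * bernstein n k x) := by
      intro k
      have hbnn : (0 : ℝ) ≤ bernstein n k x := bernstein_nonneg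
      have hnorm : ‖((bernstein n k x : ℝ) : ℂ) • (F ((k : ℝ) / n) z - F t z)‖
          = bernstein n k x * ‖F ((k : ℝ) / n) z - F t z‖ := by
        rw [norm_smul, Complex.norm_real, Real.norm_eq_abs, _root_.abs_of_nonneg hbnn]
      rw [hnorm]
      have hmem1 : ((k : ℝ) / n, z) ∈ K := ⟨hzmem k, hz⟩
      have hmem2 : (t, z) ∈ K := ⟨ht, hz⟩
      by_cases hcl : dist ((k : ℝ) / n) t < η
      · have := hηs _ hmem1 _ hmem2 (by
          rw [Prod.dist_eq]
          simp only [dist_self]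
          exact max_lt hcl hη)
        rw [dist_eq_norm] at this
        have h2 : (0 : ℝ) ≤ 2 * M' / η ^ 2 * (((x : ℝ) - ((k : ℝ) / n)) ^ 2 * bernstein n k x) := by
          positivity
        nlinarith
      · push_neg at hcl
        have hfar : η ^ 2 ≤ ((x : ℝ) - ((k : ℝ) / n)) ^ 2 := by
          have : η ≤ |(x : ℝ) - ((k : ℝ) / n)| := by
            rw [Real.dist_eq] at hcl
            rw [abs_sub_comm]
            exact hcl
          calc η ^ 2 ≤ |(x : ℝ) - ((k : ℝ) / n)| ^ 2 := by
                apply pow_le_pow_left₀ (le_of_lt hη) this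
            _ = _ := sq_abs _
        have hbd : ‖F ((k : ℝ) / n) z - F t z‖ ≤ 2 * M' := by
          calc ‖F ((k : ℝ) / n) z - F t z‖ ≤ ‖F ((k : ℝ) / n) z‖ + ‖F t z‖ := norm_sub_le _ _
            _ ≤ M' + M' := add_le_add (hM' ((k : ℝ) / n, z) hmem1) (hM' (t, z) hmem2)
            _ = 2 * M' := by ring
        have step : bernstein n k x * ‖F ((k : ℝ) / n) z - F t z‖
            ≤ 2 * M' / η ^ 2 * (((x : ℝ) - ((k : ℝ) / n)) ^ 2 * bernstein n k x) := by
          have h1 : bernstein n k x * ‖F ((k : ℝ) / n) z - F t z‖ ≤ bernstein n k x * (2 * M') :=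
            mul_le_mul_of_nonneg_left hbd hbnn
          have h2 : bernstein n k x * (2 * M')
              = 2 * M' / η ^ 2 * (η ^ 2 * bernstein n k x) := by
            field_simp
          have h3 : 2 * M' / η ^ 2 * (η ^ 2 * bernstein n k x)
              ≤ 2 * M' / η ^ 2 * (((x : ℝ) - ((k : ℝ) / n)) ^ 2 * bernstein n k x) := by
            apply mul_le_mul_of_nonneg_left _ (by positivity)
            exact mul_le_mul_of_nonneg_right hfar hbnn
          linarith
        have hd3 : (0 : ℝ) ≤ bernstein n k x * (δ / 3) := by positivity
        linarith
    have hsum : ‖G ((t : ℂ), z) - F t z‖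
        ≤ δ / 3 + 2 * M' / η ^ 2 * ((x : ℝ) * (1 - (x : ℝ)) / n) := by
      rw [hdiff]
      calc ‖∑ k : Fin (n + 1), ((bernstein n k x : ℝ) : ℂ) • (F ((k : ℝ) / n) z - F t z)‖
          ≤ ∑ k : Fin (n + 1), ‖((bernstein n k x : ℝ) : ℂ) • (F ((k : ℝ) / n) z - F t z)‖ :=
            norm_sum_le _ _
        _ ≤ ∑ k : Fin (n + 1), (bernstein n k x * (δ / 3)
              + 2 * M' / η ^ 2 * (((x : ℝ) - ((k : ℝ) / n)) ^ 2 * bernstein n k x)) :=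
            Finset.sum_le_sum fun k _ => hterm k
        _ = (∑ k : Fin (n + 1), bernstein n k x) * (δ / 3)
              + 2 * M' / η ^ 2 * ∑ k : Fin (n + 1), ((x : ℝ) - ((k : ℝ) / n)) ^ 2
                * bernstein n k x := by
            rw [Finset.sum_add_distrib, ← Finset.sum_mul, ← Finset.mul_sum]
        _ = δ / 3 + 2 * M' / η ^ 2 * ((x : ℝ) * (1 - (x : ℝ)) / n) := by
            rw [bernstein.probability n x, one_mul]
            congr 1
            congr 1
            have hv := bernstein.variance (n := n) (by exact_mod_cast hnne) x
            rw [← hv]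
            rfl
      -- end calc
    have hxx : (x : ℝ) * (1 - (x : ℝ)) ≤ 1 := by
      have h0 : (0 : ℝ) ≤ (x : ℝ) := ht.1
      have h1 : (x : ℝ) ≤ 1 := ht.2
      nlinarith
    have hlast : 2 * M' / η ^ 2 * ((x : ℝ) * (1 - (x : ℝ)) / n) ≤ 2 * M' / (η ^ 2 * n) := by
      have : (x : ℝ) * (1 - (x : ℝ)) / n ≤ 1 / n := by
        gcongr
      calc 2 * M' / η ^ 2 * ((x : ℝ) * (1 - (x : ℝ)) / n)
          ≤ 2 * M' / η ^ 2 * (1 / n) := by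
            apply mul_le_mul_of_nonneg_left this (by positivity)
        _ = 2 * M' / (η ^ 2 * n) := by field_simp
    calc ‖G ((t : ℂ), z) - F t z‖ ≤ δ / 3 + 2 * M' / η ^ 2 * ((x : ℝ) * (1 - (x : ℝ)) / n) := hsum
      _ ≤ δ / 3 + 2 * M' / (η ^ 2 * n) := by linarith
      _ < δ / 3 + δ / 3 := by linarith
      _ < δ := by linarith
  · -- exactness at t = 1
    intro z hz
    have hzero : ∀ k : Fin (n + 1), k ≠ Fin.last n → c k 1 • F ((k : ℝ) / n) z = 0 := by
      intro k hk
      have hklt : (k : ℕ) < n := by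
        rcases lt_or_eq_of_le (Nat.lt_succ_iff.mp k.isLt) with h | h
        · exact h
        · exact absurd (Fin.ext (h.trans (Fin.val_last n).symm)) hk
      have : c k 1 = 0 := by
        rw [hcdef]
        simp only [sub_self]
        rw [zero_pow (by omega)]
        ring
      rw [this, zero_smul]
    have : G ((1 : ℂ), z) = c (Fin.last n) 1 • F (((Fin.last n : Fin (n + 1)) : ℝ) / n) z := by
      rw [hGdef]
      exact Finset.sum_eq_single _ (fun k _ hk => hzero k hk) (fun h => absurd (Finset.mem_univ _) h)
    rw [this]
    have hcl : c (Fin.last n) 1 = 1 := by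
      rw [hcdef]
      simp [Fin.val_last]
    rw [hcl, one_smul]
    congr 1
    rw [Fin.val_last]
    field_simp
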